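/- The Beta rule of HOL is validated by reflexivity in the translation: for a HOL term M of type B with x a variable of type A, the Dedukti term Refl |B| |M| is well-typed in Σ, in the context declaring the translated free type variables and free term variables of (λx:A.M) x, with type ||(λx:A.M) x = M||, i.e., proof(eq |B| |(λx:A.M) x| |M|). -/

import Mathlib

set_option autoImplicit false

namespace HolDk

/-! ### Dedukti: the λΠ-calculus modulo rewriting, with de Bruijn indices.

Terms `M, N, A, B ::= x | c | Type | Kind | Πx:A.B | λx:A.M | M N`. -/

inductive DTm : Type
  | var   : ℕ → DTm
  | const : ℕ → DTm
  | type  : DTm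
  | kind  : DTm
  | pi    : DTm → DTm → DTm
  | lam   : DTm → DTm → DTm
  | app   : DTm → DTm → DTm
  deriving DecidableEq

namespace DTm

/-- Shift the free de Bruijn indices `≥ c` up by `d`. -/
def shift (d : ℕ) : ℕ → DTm → DTm
  | c, var n => if n < c then var n else var (n + d)
  | _, const k => const k
  | _, type => type
  | _, kind => kind
  | c, pi A B => pi (shift d c A) (shift d (c+1) B)
  | c, lam A M => lam (shift d c A) (shift d (c+1) M)
  | c, app M N => app (shift d c M) (shift d c N)

/-- Lift a simultaneous substitution under one binder. -/
def liftSub (σ : ℕ → DTm) : ℕ → DTm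
  | 0 => var 0
  | n+1 => shift 1 0 (σ n)

/-- Simultaneous substitution. -/
def subst (σ : ℕ → DTm) : DTm → DTm
  | var n => σ n
  | const k => const k
  | type => type
  | kind => kind
  | pi A B => pi (subst σ A) (subst (liftSub σ) B)
  | lam A M => lam (subst σ A) (subst (liftSub σ) M)
  | app M N => app (subst σ M) (subst σ N)

/-- Substitution `[N/x]M` of `N` for the de Bruijn index `0` in `M`. -/
def subst0 (M N : DTm) : DTm :=
  subst (fun n => match n with | 0 => N | n+1 => var n) M

/-- Non-dependent product `A → B`. -/
def arr (A B : DTm) : DTm := pi A (shift 1 0 B)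

end DTm

/-- Signatures `Σ ::= · | Σ, c : A | Σ, [Γ] M ⇝ N`. -/
inductive Sig : Type
  | empty : Sig
  | pushConst : Sig → ℕ → DTm → Sig
  | pushRule : Sig → List DTm → DTm → DTm → Sig

/-- Lookup of the type of a constant in a signature. -/
def Sig.constType : Sig → ℕ → Option DTm
  | .empty, _ => none
  | .pushConst S c A, d => if d = c then some A else S.constType d
  | .pushRule S _ _ _, d => S.constType d

/-- Membership of a rewrite rule `[Γ] M ⇝ N` in a signature. -/
def Sig.hasRule : Sig → List DTm → DTm → DTm → Prop
  | .empty, _, _, _ => False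
  | .pushConst S _ _, G, M, N => S.hasRule G M N
  | .pushRule S G' M' N', G, M, N => (G = G' ∧ M = M' ∧ N = N') ∨ S.hasRule G M N

/-- Pure β-reduction (one step, contextual closure). -/
inductive RedBeta : DTm → DTm → Prop
  | beta (A M N) : RedBeta (.app (.lam A M) N) (M.subst0 N)
  | appL {M M'} (N) : RedBeta M M' → RedBeta (.app M N) (.app M' N)
  | appR (M) {N N'} : RedBeta N N' → RedBeta (.app M N) (.app M N')
  | lamTy {A A'} (M) : RedBeta A A' → RedBeta (.lam A M) (.lam A' M)
  | lamBody (A) {M M'} : RedBeta M M' → RedBeta (.lam A M) (.lam A M')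
  | piL {A A'} (B) : RedBeta A A' → RedBeta (.pi A B) (.pi A' B)
  | piR (A) {B B'} : RedBeta B B' → RedBeta (.pi A B) (.pi A B')

/-- The reduction relation `→βΣ`: β-reduction together with the rewrite rules of
the signature (one step, contextual closure). -/
inductive Red (S : Sig) : DTm → DTm → Prop
  | beta (A M N) : Red S (.app (.lam A M) N) (M.subst0 N)
  | rew {G L R} (σ : ℕ → DTm) : S.hasRule G L R → Red S (L.subst σ) (R.subst σ)
  | appL {M M'} (N) : Red S M M' → Red S (.app M N) (.app M' N)
  | appR (M) {N N'} : Red S N N' → Red S (.app M N) (.app M N')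
  | lamTy {A A'} (M) : Red S A A' → Red S (.lam A M) (.lam A' M)
  | lamBody (A) {M M'} : Red S M M' → Red S (.lam A M) (.lam A M')
  | piL {A A'} (B) : Red S A A' → Red S (.pi A B) (.pi A' B)
  | piR (A) {B B'} : Red S B B' → Red S (.pi A B) (.pi A B')

/-- The conversion `≡βΣ`: reflexive symmetric transitive closure of `→βΣ`. -/
def Conv (S : Sig) : DTm → DTm → Prop := Relation.EqvGen (Red S)

mutual
/-- Signature formation `Σ signature`. -/
inductive SigWf : Sig → Prop
  | empty : SigWf .empty
  | pushConst {S : Sig} {c : ℕ} {A s : DTm} : SigWf S → Typed S [] A s →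
      (s = DTm.type ∨ s = DTm.kind) → S.constType c = none →
      SigWf (S.pushConst c A)
  | pushRule {S : Sig} {G : List DTm} {M N A : DTm} : SigWf S →
      Typed S G M A → Typed S G N A → SigWf (S.pushRule G M N)

/-- Context formation `Σ | Γ context` (contexts are lists, head = most recent binding). -/
inductive CtxWf : Sig → List DTm → Prop
  | nil {S : Sig} : SigWf S → CtxWf S []
  | cons {S : Sig} {G : List DTm} {A : DTm} : CtxWf S G → Typed S G A DTm.type →
      CtxWf S (A :: G)

/-- The typing judgment `Σ | Γ ⊢ M : A` of the λΠ-calculus modulo rewriting. -/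
inductive Typed : Sig → List DTm → DTm → DTm → Prop
  | var {S : Sig} {G : List DTm} {n : ℕ} {A : DTm} : CtxWf S G → G[n]? = some A →
      Typed S G (.var n) (A.shift (n+1) 0)
  | const {S : Sig} {G : List DTm} {c : ℕ} {A : DTm} : CtxWf S G →
      S.constType c = some A → Typed S G (.const c) A
  | type {S : Sig} {G : List DTm} : CtxWf S G → Typed S G .type .kind
  | prod {S : Sig} {G : List DTm} {A B s : DTm} : Typed S G A .type →
      Typed S (A :: G) B s → (s = DTm.type ∨ s = DTm.kind) → Typed S G (.pi A B) s
  | abs {S : Sig} {G : List DTm} {A M B : DTm} : Typed S G A .type →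
      Typed S (A :: G) M B → Typed S G (.lam A M) (.pi A B)
  | app {S : Sig} {G : List DTm} {M N A B : DTm} : Typed S G M (.pi A B) →
      Typed S G N A → Typed S G (.app M N) (B.subst0 N)
  | conv {S : Sig} {G : List DTm} {M A B : DTm} : Typed S G M A →
      Typed S G B DTm.type → Conv S A B → Typed S G M B
end

/-! ### HOL -/

/-- HOL types: type variables, `bool`, `ind`, and arrow types. -/
inductive HTy : Type
  | tvar : ℕ → HTy
  | bool : HTy
  | ind  : HTy
  | arr  : HTy → HTy → HTy
  deriving DecidableEq

/-- HOL terms (simply typed λ-terms, de Bruijn indices for term variables),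
with the polymorphic constants `(=_A)` and `select_A`. -/
inductive HTm : Type
  | var    : ℕ → HTm
  | lam    : HTy → HTm → HTm
  | app    : HTm → HTm → HTm
  | eq     : HTy → HTm
  | select : HTy → HTm
  deriving DecidableEq

/-- The HOL proposition `M = N` (at type `A`), i.e. `(=_A) M N`. -/
def HTm.heq (A : HTy) (M N : HTm) : HTm := .app (.app (.eq A) M) N

/-- HOL typing: `Δ ⊢ M : A` where `Δ` types the term variables. -/
inductive HTyped : List HTy → HTm → HTy → Prop
  | var {D : List HTy} {n : ℕ} {A : HTy} : D[n]? = some A → HTyped D (.var n) A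
  | lam {D : List HTy} {A B : HTy} {M : HTm} : HTyped (A :: D) M B →
      HTyped D (.lam A M) (A.arr B)
  | app {D : List HTy} {A B : HTy} {M N : HTm} : HTyped D M (A.arr B) →
      HTyped D N A → HTyped D (.app M N) B
  | eq {D : List HTy} {A : HTy} : HTyped D (.eq A) (A.arr (A.arr .bool))
  | select {D : List HTy} {A : HTy} : HTyped D (.select A) ((A.arr .bool).arr A)

namespace HTm

/-- Shift the free term-variable indices `≥ c` up by `d`. -/
def shift (d : ℕ) : ℕ → HTm → HTm
  | c, var n => if n < c then var n else var (n + d)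
  | c, lam A M => lam A (shift d (c+1) M)
  | c, app M N => app (shift d c M) (shift d c N)
  | _, eq A => eq A
  | _, select A => select A

def liftSub (σ : ℕ → HTm) : ℕ → HTm
  | 0 => var 0
  | n+1 => shift 1 0 (σ n)

/-- Simultaneous capture-avoiding substitution of term variables. -/
def substF (σ : ℕ → HTm) : HTm → HTm
  | var n => σ n
  | lam A M => lam A (substF (liftSub σ) M)
  | app M N => app (substF σ M) (substF σ N)
  | eq A => eq A
  | select A => select A

/-- Substitution `[N/x]M` for the de Bruijn index `0`. -/
def subst0 (M N : HTm) : HTm :=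
  substF (fun n => match n with | 0 => N | n+1 => var n) M

/-- Simultaneous (parallel) substitution `M[M₁/x₁, …, Mₙ/xₙ]` given by a list. -/
def substL (σ : List HTm) (M : HTm) : HTm :=
  substF (fun n => (σ[n]?).getD (var n)) M

end HTm

/-- Type substitution `A[A₁/α₁, …, Aₘ/αₘ]` on HOL types. -/
def HTy.tsub (θ : List HTy) : HTy → HTy
  | .tvar n => (θ[n]?).getD (.tvar n)
  | .bool => .bool
  | .ind => .ind
  | .arr A B => .arr (A.tsub θ) (B.tsub θ)

/-- Type substitution on HOL terms. -/
def HTm.tsub (θ : List HTy) : HTm → HTm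
  | .var n => .var n
  | .lam A M => .lam (A.tsub θ) (M.tsub θ)
  | .app M N => .app (M.tsub θ) (N.tsub θ)
  | .eq A => .eq (A.tsub θ)
  | .select A => .select (A.tsub θ)

/-- All free type variables of a HOL type are `< n`. -/
def HTy.tvLt (n : ℕ) : HTy → Prop
  | .tvar j => j < n
  | .bool => True
  | .ind => True
  | .arr A B => A.tvLt n ∧ B.tvLt n

/-- All free type variables of a HOL term are `< n`. -/
def HTm.tvLt (n : ℕ) : HTm → Prop
  | .var _ => True
  | .lam A M => A.tvLt n ∧ M.tvLt n
  | .app M N => M.tvLt n ∧ N.tvLt n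
  | .eq A => A.tvLt n
  | .select A => A.tvLt n

/-- One-step β-reduction of HOL terms (contextual closure). -/
inductive HBeta : HTm → HTm → Prop
  | beta (A : HTy) (M N : HTm) : HBeta (.app (.lam A M) N) (M.subst0 N)
  | appL {M M'} (N) : HBeta M M' → HBeta (.app M N) (.app M' N)
  | appR (M) {N N'} : HBeta N N' → HBeta (.app M N) (.app M N')
  | lamBody (A) {M M'} : HBeta M M' → HBeta (.lam A M) (.lam A M')

/-- HOL derivations `Γ ⊢ φ` (Fig. 2), in an ambient term-variable context `Δ`,
with hypotheses `Γ` a finite set of propositions.  The `Subst` rule is split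
into a type-substitution rule and a term-substitution rule. -/
inductive HDeriv : List HTy → Finset HTm → HTm → Type
  | refl {D : List HTy} (A : HTy) (M : HTm) :
      HTyped D M A → HDeriv D ∅ (HTm.heq A M M)
  | absThm {D : List HTy} {G : Finset HTm} (A B : HTy) (M N : HTm) :
      HDeriv (A :: D) (G.image (HTm.shift 1 0)) (HTm.heq B M N) →
      HDeriv D G (HTm.heq (A.arr B) (.lam A M) (.lam A N))
  | appThm {D : List HTy} {G G' : Finset HTm} (A B : HTy) (F Gt M N : HTm) :
      HDeriv D G (HTm.heq (A.arr B) F Gt) → HDeriv D G' (HTm.heq A M N) →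
      HDeriv D (G ∪ G') (HTm.heq B (F.app M) (Gt.app N))
  | beta {D : List HTy} (A B : HTy) (M : HTm) :
      HTyped (A :: D) M B →
      HDeriv (A :: D) ∅ (HTm.heq B (.app (.lam A (M.shift 1 1)) (.var 0)) M)
  | assume {D : List HTy} (φ : HTm) : HTyped D φ .bool → HDeriv D {φ} φ
  | eqMp {D : List HTy} {G G' : Finset HTm} (φ ψ : HTm) :
      HDeriv D G (HTm.heq .bool φ ψ) → HDeriv D G' φ →
      HDeriv D (G ∪ G') ψ
  | deductAntiSym {D : List HTy} {G G' : Finset HTm} (φ ψ : HTm) :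
      HDeriv D G φ → HDeriv D G' ψ →
      HDeriv D (G.erase ψ ∪ G'.erase φ) (HTm.heq .bool φ ψ)
  | typeSubst {D : List HTy} {G : Finset HTm} {φ : HTm} (θ : List HTy) :
      HDeriv D G φ →
      HDeriv (D.map (HTy.tsub θ)) (G.image (HTm.tsub θ)) (φ.tsub θ)
  | termSubst {D : List HTy} {G : Finset HTm} {φ : HTm} {D' : List HTy} (σ : List HTm) :
      σ.length = D.length →
      (∀ (i : ℕ) (A : HTy), D[i]? = some A → ∃ t, σ[i]? = some t ∧ HTyped D' t A) →
      HDeriv D G φ →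
      HDeriv D' (G.image (HTm.substL σ)) (HTm.substL σ φ)

/-! ### The Dedukti signature Σ for HOL -/

def cTy : DTm := .const 0
def dBool : DTm := .const 1
def dInd : DTm := .const 2
def tArr (a b : DTm) : DTm := .app (.app (.const 3) a) b
def tTerm (a : DTm) : DTm := .app (.const 4) a
def tEq (a x y : DTm) : DTm := .app (.app (.app (.const 5) a) x) y
def tProof (p : DTm) : DTm := .app (.const 7) p
def dRefl : DTm := .const 8
def dFunExt : DTm := .const 9
def dAppThm : DTm := .const 10
def dPropExt : DTm := .const 11
def dEqMp : DTm := .const 12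
def dImp : DTm := .const 13
def dForall : DTm := .const 14

def tyArrow : DTm := DTm.arr cTy (DTm.arr cTy cTy)
def tyTerm : DTm := DTm.arr cTy .type
def tyEq : DTm := .pi cTy (tTerm (tArr (.var 0) (tArr (.var 0) dBool)))
def tySelect : DTm := .pi cTy (tTerm (tArr (tArr (.var 0) dBool) (.var 0)))
def tyProof : DTm := DTm.arr (tTerm dBool) .type
def tyRefl : DTm :=
  .pi cTy (.pi (tTerm (.var 0)) (tProof (tEq (.var 1) (.var 0) (.var 0))))
def tyFunExt : DTm :=
  .pi cTy (.pi cTy (.pi (tTerm (tArr (.var 1) (.var 0))) (.pi (tTerm (tArr (.var 2) (.var 1)))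
    (DTm.arr
      (.pi (tTerm (.var 3))
        (tProof (tEq (.var 3) (.app (.var 2) (.var 0)) (.app (.var 1) (.var 0)))))
      (tProof (tEq (tArr (.var 3) (.var 2)) (.var 1) (.var 0)))))))
def tyAppThm : DTm :=
  .pi cTy (.pi cTy (.pi (tTerm (tArr (.var 1) (.var 0))) (.pi (tTerm (tArr (.var 2) (.var 1)))
    (.pi (tTerm (.var 3)) (.pi (tTerm (.var 4))
      (DTm.arr (tProof (tEq (tArr (.var 5) (.var 4)) (.var 3) (.var 2)))
        (DTm.arr (tProof (tEq (.var 5) (.var 1) (.var 0)))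
          (tProof (tEq (.var 4) (.app (.var 3) (.var 1)) (.app (.var 2) (.var 0)))))))))))
def tyPropExt : DTm :=
  .pi (tTerm dBool) (.pi (tTerm dBool)
    (DTm.arr (DTm.arr (tProof (.var 0)) (tProof (.var 1)))
      (DTm.arr (DTm.arr (tProof (.var 0)) (tProof (.var 1)))
        (tProof (tEq dBool (.var 1) (.var 0))))))
def tyEqMp : DTm :=
  .pi (tTerm dBool) (.pi (tTerm dBool)
    (DTm.arr (tProof (tEq dBool (.var 1) (.var 0)))
      (DTm.arr (tProof (.var 1)) (tProof (.var 0)))))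

/-- The rewrite rule `[α : type, β : type] term (arrow α β) ⇝ term α → term β`
(in the context list, the head is the most recent variable `β`). -/
def arrowRuleCtx : List DTm := [cTy, cTy]
def arrowRuleL : DTm := tTerm (tArr (.var 1) (.var 0))
def arrowRuleR : DTm := DTm.arr (tTerm (.var 1)) (tTerm (.var 0))

def baseSig : Sig :=
  ((((Sig.empty.pushConst 0 .type).pushConst 1 cTy).pushConst 2 cTy).pushConst 3
    tyArrow).pushConst 4 tyTerm

/-- The HOL signature Σ:
`type : Type`, `bool ind : type`, `arrow : type → type → type`, `term : type → Type`,
`eq`, `select`, the rewrite rule `term (arrow α β) ⇝ term α → term β`,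
`proof : term bool → Type`, and `Refl`, `FunExt`, `AppThm`, `PropExt`, `EqMp`. -/
def holSig : Sig :=
  ((((((((baseSig.pushConst 5 tyEq).pushConst 6 tySelect).pushRule arrowRuleCtx
    arrowRuleL arrowRuleR).pushConst 7 tyProof).pushConst 8 tyRefl).pushConst 9
    tyFunExt).pushConst 10 tyAppThm).pushConst 11 tyPropExt).pushConst 12 tyEqMp

/-! ### The translation -/

/-- Translation `|A|` of a HOL type as a Dedukti term; `ρ` gives the Dedukti
de Bruijn index of each HOL type variable. -/
def transTy (ρ : ℕ → ℕ) : HTy → DTm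
  | .tvar j => .var (ρ j)
  | .bool => dBool
  | .ind => dInd
  | .arr A B => tArr (transTy ρ A) (transTy ρ B)

/-- Lift a variable renaming under one binder. -/
def liftVar (ρ : ℕ → ℕ) : ℕ → ℕ
  | 0 => 0
  | n+1 => ρ n + 1

/-- Translation `|M|` of a HOL term as a Dedukti term; `ρT`, `ρt` give the
Dedukti de Bruijn indices of the free HOL type resp. term variables. -/
def transTm (ρT ρt : ℕ → ℕ) : HTm → DTm
  | .var i => .var (ρt i)
  | .lam A M => .lam (tTerm (transTy ρT A)) (transTm (fun j => ρT j + 1) (liftVar ρt) M)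
  | .app M N => .app (transTm ρT ρt M) (transTm ρT ρt N)
  | .eq A => .app (.const 5) (transTy ρT A)
  | .select A => .app (.const 6) (transTy ρT A)

/-- The Dedukti context `x₁ : ‖A₁‖, …, xₖ : ‖Aₖ‖` translating a HOL
term-variable context (to be placed in front of the `n` type variables). -/
def dTermCtx : List HTy → List DTm
  | [] => []
  | A :: D => tTerm (transTy (fun j => D.length + j) A) :: dTermCtx D

/-- The Dedukti context `‖Γ‖ = h₁ : ‖φ₁‖, …` translating HOL hypotheses;
`k` is the number of HOL term variables in scope. -/
def hypCtx (k : ℕ) : List HTm → List DTm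
  | [] => []
  | φ :: rest =>
      tProof (transTm (fun j => rest.length + k + j) (fun i => rest.length + i) φ) ::
        hypCtx k rest

def mkApps (f : DTm) (args : List DTm) : DTm := args.foldl .app f

def mkTyLams : ℕ → DTm → DTm
  | 0, M => M
  | n+1, M => .lam cTy (mkTyLams n M)

/-- `λx₁ : ‖B₁‖. … λxₖ : ‖Bₖ‖. M` (the head of the list is the innermost binder). -/
def bindTerms (ρT : ℕ → ℕ) : List HTy → DTm → DTm
  | [], M => M
  | A :: D, M => bindTerms ρT D (.lam (tTerm (transTy (fun j => ρT j + D.length) A)) M)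

/-- Translation `|𝒟|` of a HOL derivation as a Dedukti proof term; `ρT`, `ρt`
give the Dedukti indices of free HOL type/term variables, and `ρh` gives the
index of the hypothesis variable `h_φ` for each hypothesis `φ`. -/
def transDeriv : {D : List HTy} → {G : Finset HTm} → {φ : HTm} →
    (ρT ρt : ℕ → ℕ) → (ρh : HTm → ℕ) → HDeriv D G φ → DTm
  | _, _, _, ρT, ρt, _, .refl A M _ =>
      .app (.app dRefl (transTy ρT A)) (transTm ρT ρt M)
  | _, _, _, ρT, ρt, ρh, .absThm A B M N d =>
      .app (.app (.app (.app (.app dFunExt (transTy ρT A)) (transTy ρT B))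
          (transTm ρT ρt (.lam A M))) (transTm ρT ρt (.lam A N)))
        (.lam (tTerm (transTy ρT A))
          (transDeriv (fun j => ρT j + 1) (liftVar ρt)
            (fun χ => ρh (HTm.substF (fun i => .var (i - 1)) χ) + 1) d))
  | _, _, _, ρT, ρt, ρh, .appThm A B F Gt M N d1 d2 =>
      mkApps dAppThm [transTy ρT A, transTy ρT B, transTm ρT ρt F, transTm ρT ρt Gt,
        transTm ρT ρt M, transTm ρT ρt N,
        transDeriv ρT ρt ρh d1, transDeriv ρT ρt ρh d2]
  | _, _, _, ρT, ρt, _, .beta _ B M _ =>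
      .app (.app dRefl (transTy ρT B)) (transTm ρT ρt M)
  | _, _, _, _, _, ρh, .assume φ _ => .var (ρh φ)
  | _, _, _, ρT, ρt, ρh, .eqMp φ ψ d1 d2 =>
      mkApps dEqMp [transTm ρT ρt φ, transTm ρT ρt ψ,
        transDeriv ρT ρt ρh d1, transDeriv ρT ρt ρh d2]
  | _, _, _, ρT, ρt, ρh, .deductAntiSym φ ψ d1 d2 =>
      mkApps dPropExt [transTm ρT ρt φ, transTm ρT ρt ψ,
        .lam (tProof (transTm ρT ρt ψ))
          (transDeriv (fun j => ρT j + 1) (fun i => ρt i + 1)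
            (fun χ => if χ = ψ then 0 else ρh χ + 1) d1),
        .lam (tProof (transTm ρT ρt φ))
          (transDeriv (fun j => ρT j + 1) (fun i => ρt i + 1)
            (fun χ => if χ = φ then 0 else ρh χ + 1) d2)]
  | _, _, _, ρT, ρt, ρh, .typeSubst θ d =>
      mkApps
        (mkTyLams θ.length
          (transDeriv (fun j => if j < θ.length then j else ρT j + θ.length)
            (fun i => ρt i + θ.length)
            (fun χ => ρh (HTm.tsub θ χ) + θ.length) d))
        (θ.reverse.map (transTy ρT))
  | _, _, _, ρT, ρt, ρh, @HDeriv.termSubst D₀ _ _ _ σ _ _ d =>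
      mkApps
        (bindTerms ρT D₀
          (transDeriv (fun j => ρT j + D₀.length)
            (fun i => if i < D₀.length then i else ρt (i - D₀.length) + D₀.length)
            (fun χ => ρh (HTm.substL σ χ) + D₀.length) d))
        (σ.reverse.map (transTm ρT ρt))

/-- All free type variables appearing in a HOL derivation are `< n`. -/
def HDeriv.tvLt (n : ℕ) : {D : List HTy} → {G : Finset HTm} → {φ : HTm} →
    HDeriv D G φ → Prop
  | _, _, _, .refl A M _ => A.tvLt n ∧ M.tvLt n
  | _, _, _, .absThm A B M N d =>
      A.tvLt n ∧ B.tvLt n ∧ M.tvLt n ∧ N.tvLt n ∧ HDeriv.tvLt n d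
  | _, _, _, .appThm A B F Gt M N d1 d2 =>
      A.tvLt n ∧ B.tvLt n ∧ F.tvLt n ∧ Gt.tvLt n ∧ M.tvLt n ∧ N.tvLt n ∧
        HDeriv.tvLt n d1 ∧ HDeriv.tvLt n d2
  | _, _, _, .beta A B M _ => A.tvLt n ∧ B.tvLt n ∧ M.tvLt n
  | _, _, _, .assume φ _ => φ.tvLt n
  | _, _, _, .eqMp φ ψ d1 d2 => φ.tvLt n ∧ ψ.tvLt n ∧ HDeriv.tvLt n d1 ∧ HDeriv.tvLt n d2
  | _, _, _, .deductAntiSym φ ψ d1 d2 =>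
      φ.tvLt n ∧ ψ.tvLt n ∧ HDeriv.tvLt n d1 ∧ HDeriv.tvLt n d2
  | _, _, _, .typeSubst θ d => (∀ A ∈ θ, A.tvLt n) ∧ HDeriv.tvLt (max θ.length n) d
  | _, _, _, .termSubst σ _ _ d => (∀ t ∈ σ, t.tvLt n) ∧ HDeriv.tvLt n d

/-! ### Auxiliary lemmas -/

namespace DTm

theorem shift_shift (d1 d2 : ℕ) : ∀ (X : DTm) (c : ℕ),
    shift d2 c (shift d1 c X) = shift (d1 + d2) c X := by
  intro X
  induction X with
  | var n =>
    intro c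
    by_cases h : n < c
    · simp [shift, h]
    · have h2 : ¬ n + d1 < c := by omega
      simp [shift, h, h2]; omega
  | const k => intro c; rfl
  | type => intro c; rfl
  | kind => intro c; rfl
  | pi A B ihA ihB => intro c; simp [shift, ihA, ihB]
  | lam A M ihA ihM => intro c; simp [shift, ihA, ihM]
  | app M N ihM ihN => intro c; simp [shift, ihM, ihN]

theorem liftSub_var : liftSub (fun n => var n) = fun n => var n := by
  funext n; cases n <;> rfl

theorem subst_id : ∀ X : DTm, subst (fun n => var n) X = X := by
  intro X
  induction X with
  | var n => rfl
  | const k => rfl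
  | type => rfl
  | kind => rfl
  | pi A B ihA ihB => simp [subst, liftSub_var, ihA, ihB]
  | lam A M ihA ihM => simp [subst, liftSub_var, ihA, ihM]
  | app M N ihM ihN => simp [subst, ihM, ihN]

theorem subst_shift1 : ∀ (X : DTm) (c : ℕ) (σ : ℕ → DTm),
    subst σ (shift 1 c X) = subst (fun n => if n < c then σ n else σ (n+1)) X := by
  intro X
  induction X with
  | var n =>
    intro c σ
    by_cases h : n < c <;> simp [shift, subst, h]
  | const k => intro c σ; rfl
  | type => intro c σ; rfl
  | kind => intro c σ; rfl
  | pi A B ihA ihB =>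
    intro c σ
    have hl : (fun n => if n < c + 1 then liftSub σ n else liftSub σ (n+1))
        = liftSub (fun n => if n < c then σ n else σ (n+1)) := by
      funext n
      cases n with
      | zero => simp [liftSub]
      | succ m =>
        by_cases h : m < c
        · simp [liftSub, h, Nat.succ_lt_succ_iff]
        · simp [liftSub, h, Nat.succ_lt_succ_iff]
    simp only [shift, subst, ihA, ihB, hl]
  | lam A M ihA ihM =>
    intro c σ
    have hl : (fun n => if n < c + 1 then liftSub σ n else liftSub σ (n+1))
        = liftSub (fun n => if n < c then σ n else σ (n+1)) := by
      funext n
      cases n with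
      | zero => simp [liftSub]
      | succ m =>
        by_cases h : m < c
        · simp [liftSub, h, Nat.succ_lt_succ_iff]
        · simp [liftSub, h, Nat.succ_lt_succ_iff]
    simp only [shift, subst, ihA, ihM, hl]
  | app M N ihM ihN => intro c σ; simp [shift, subst, ihM, ihN]

theorem subst0_shift_cancel (X N : DTm) : (shift 1 0 X).subst0 N = X := by
  unfold subst0
  rw [subst_shift1]
  have : (fun n => if n < 0 then (fun n => match n with | 0 => N | n+1 => var n) n
      else (fun n => match n with | 0 => N | n+1 => var n) (n+1)) = fun n => var n := by
    funext n; simp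
  rw [this, subst_id]

end DTm

theorem transTy_rename (r : ℕ → ℕ) (ρ : ℕ → ℕ) : ∀ A : HTy,
    DTm.subst (fun n => .var (r n)) (transTy ρ A) = transTy (fun j => r (ρ j)) A := by
  intro A
  induction A with
  | tvar j => rfl
  | bool => rfl
  | ind => rfl
  | arr A B ihA ihB => simp [transTy, tArr, DTm.subst, ihA, ihB]

theorem liftSub_rename (r : ℕ → ℕ) :
    DTm.liftSub (fun n => .var (r n)) = fun n => .var (liftVar r n) := by
  funext n; cases n <;> rfl

theorem transTm_rename : ∀ (M : HTm) (r ρT ρt : ℕ → ℕ),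
    DTm.subst (fun n => .var (r n)) (transTm ρT ρt M)
      = transTm (fun j => r (ρT j)) (fun i => r (ρt i)) M := by
  intro M
  induction M with
  | var i => intro r ρT ρt; rfl
  | lam A M ihM =>
    intro r ρT ρt
    simp only [transTm, tTerm, DTm.subst, liftSub_rename]
    rw [ihM (liftVar r)]
    rw [transTy_rename]
    have h1 : (fun j => liftVar r (ρT j + 1)) = fun j => r (ρT j) + 1 := by
      funext j; rfl
    have h2 : (fun i => liftVar r (liftVar ρt i)) = liftVar (fun i => r (ρt i)) := by
      funext i; cases i <;> rfl
    rw [h1, h2]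
  | app M N ihM ihN => intro r ρT ρt; simp [transTm, DTm.subst, ihM, ihN]
  | eq A => intro r ρT ρt; simp [transTm, DTm.subst, transTy_rename]
  | select A => intro r ρT ρt; simp [transTm, DTm.subst, transTy_rename]

theorem transTy_shift (d : ℕ) (ρ : ℕ → ℕ) : ∀ A : HTy,
    DTm.shift d 0 (transTy ρ A) = transTy (fun j => ρ j + d) A := by
  intro A
  induction A with
  | tvar j => simp [transTy, DTm.shift]
  | bool => rfl
  | ind => rfl
  | arr A B ihA ihB => simp [transTy, tArr, DTm.shift, ihA, ihB]

theorem transTm_hshift (d : ℕ) : ∀ (M : HTm) (c : ℕ) (ρT ρt : ℕ → ℕ),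
    transTm ρT ρt (HTm.shift d c M)
      = transTm ρT (fun i => if i < c then ρt i else ρt (i + d)) M := by
  intro M
  induction M with
  | var i =>
    intro c ρT ρt
    by_cases h : i < c <;> simp [HTm.shift, transTm, h]
  | lam A M ihM =>
    intro c ρT ρt
    simp only [HTm.shift, transTm]
    rw [ihM]
    have hl : (fun i => if i < c + 1 then liftVar ρt i else liftVar ρt (i + d))
        = liftVar (fun i => if i < c then ρt i else ρt (i + d)) := by
      funext i
      cases i with
      | zero => simp [liftVar]
      | succ m =>
        have e : m + 1 + d = (m + d) + 1 := by omega
        by_cases h : m < c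
        · simp [liftVar, h, Nat.succ_lt_succ_iff]
        · simp [liftVar, h, Nat.succ_lt_succ_iff, e]
    rw [hl]
  | app M N ihM ihN => intro c ρT ρt; simp [HTm.shift, transTm, ihM, ihN]
  | eq A => intro c ρT ρt; rfl
  | select A => intro c ρT ρt; rfl

theorem HTm.tvLt_shift {n : ℕ} : ∀ (M : HTm) (d c : ℕ), M.tvLt n → (M.shift d c).tvLt n := by
  intro M
  induction M with
  | var i => intro d c _; by_cases h : i < c <;> simp [HTm.shift, h, HTm.tvLt]
  | lam A M ihM => intro d c h; exact ⟨h.1, ihM d (c+1) h.2⟩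
  | app M N ihM ihN => intro d c h; exact ⟨ihM d c h.1, ihN d c h.2⟩
  | eq A => intro d c h; exact h
  | select A => intro d c h; exact h

theorem htyped_shift {A0 B : HTy} {M : HTm} {D : List HTy} (h : HTyped D M B) :
    ∀ D1 D2, D = D1 ++ D2 → HTyped (D1 ++ A0 :: D2) (M.shift 1 D1.length) B := by
  induction h with
  | @var D n A hl =>
    intro D1 D2 hD
    subst hD
    by_cases h : n < D1.length
    · simp only [HTm.shift, if_pos h]
      apply HTyped.var
      rw [List.getElem?_append, if_pos h] at hl
      rw [List.getElem?_append, if_pos h]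
      exact hl
    · simp only [HTm.shift, if_neg h]
      apply HTyped.var
      rw [List.getElem?_append_right (by omega)] at hl
      rw [List.getElem?_append_right (by omega : D1.length ≤ n + 1)]
      have : n + 1 - D1.length = (n - D1.length) + 1 := by omega
      rw [this]
      simpa using hl
  | @lam D A B M hM ih =>
    intro D1 D2 hD
    subst hD
    exact HTyped.lam (ih (A :: D1) D2 rfl)
  | app hM hN ihM ihN =>
    intro D1 D2 hD
    exact HTyped.app (ihM D1 D2 hD) (ihN D1 D2 hD)
  | eq => intro D1 D2 hD; exact HTyped.eq
  | select => intro D1 D2 hD; exact HTyped.select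

theorem htyped_tvLt {n : ℕ} {D : List HTy} {M : HTm} {B : HTy} (h : HTyped D M B) :
    M.tvLt n → (∀ (i : ℕ) (A : HTy), D[i]? = some A → A.tvLt n) → B.tvLt n := by
  induction h with
  | var hl => intro _ hD; exact hD _ _ hl
  | @lam D A B M hM' ih =>
    intro hM hD
    refine ⟨hM.1, ih hM.2 ?_⟩
    intro i A' hi
    cases i with
    | zero => simp at hi; subst hi; exact hM.1
    | succ m => exact hD m A' (by simpa using hi)
  | app hM' hN' ihM ihN => intro hM hD; exact (ihM hM.1 hD).2
  | eq => intro hM _; exact ⟨hM, hM, trivial⟩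
  | select => intro hM _; exact ⟨⟨hM, trivial⟩, hM⟩

/-! ### Typing helpers -/

theorem ty_tArr {S : Sig} {G : List DTm} {a b : DTm}
    (h3 : S.constType 3 = some tyArrow) (hG : CtxWf S G)
    (ha : Typed S G a cTy) (hb : Typed S G b cTy) :
    Typed S G (tArr a b) cTy :=
  Typed.app (B := DTm.shift 1 0 cTy)
    (Typed.app (B := DTm.shift 1 0 (DTm.arr cTy cTy)) (Typed.const hG h3) ha) hb

theorem ty_tTerm {S : Sig} {G : List DTm} {a : DTm}
    (h4 : S.constType 4 = some tyTerm) (hG : CtxWf S G)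
    (ha : Typed S G a cTy) : Typed S G (tTerm a) DTm.type :=
  Typed.app (B := DTm.shift 1 0 DTm.type) (Typed.const hG h4) ha

theorem ty_tProof {S : Sig} {G : List DTm} {p : DTm}
    (h7 : S.constType 7 = some tyProof) (hG : CtxWf S G)
    (hp : Typed S G p (tTerm dBool)) : Typed S G (tProof p) DTm.type :=
  Typed.app (B := DTm.shift 1 0 DTm.type) (Typed.const hG h7) hp

theorem red_arrow {S : Sig} {a b : DTm}
    (h : S.hasRule arrowRuleCtx arrowRuleL arrowRuleR) :
    Red S (tTerm (tArr a b)) (DTm.arr (tTerm a) (tTerm b)) :=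
  Red.rew (fun n => match n with | 0 => b | 1 => a | n+2 => .var n) h

theorem ty_appArrow {S : Sig} {G : List DTm} {f x a b : DTm}
    (h4 : S.constType 4 = some tyTerm)
    (hrule : S.hasRule arrowRuleCtx arrowRuleL arrowRuleR)
    (hG : CtxWf S G)
    (ha : Typed S G a cTy)
    (hb : Typed S (tTerm a :: G) (b.shift 1 0) cTy)
    (hf : Typed S G f (tTerm (tArr a b)))
    (hx : Typed S G x (tTerm a)) :
    Typed S G (.app f x) (tTerm b) := by
  have hTa : Typed S G (tTerm a) DTm.type := ty_tTerm h4 hG ha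
  have hGa : CtxWf S (tTerm a :: G) := .cons hG hTa
  have hTb : Typed S (tTerm a :: G) (DTm.shift 1 0 (tTerm b)) DTm.type :=
    ty_tTerm h4 hGa hb
  have hpi : Typed S G (DTm.arr (tTerm a) (tTerm b)) DTm.type :=
    Typed.prod hTa hTb (Or.inl rfl)
  have hf' : Typed S G f (DTm.arr (tTerm a) (tTerm b)) :=
    Typed.conv hf hpi (Relation.EqvGen.rel _ _ (red_arrow hrule))
  have happ := Typed.app hf' hx
  rwa [DTm.subst0_shift_cancel] at happ

theorem ty_tEq {S : Sig} {G : List DTm} {a x y : DTm}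
    (h1 : S.constType 1 = some cTy)
    (h3 : S.constType 3 = some tyArrow)
    (h4 : S.constType 4 = some tyTerm)
    (h5 : S.constType 5 = some tyEq)
    (hrule : S.hasRule arrowRuleCtx arrowRuleL arrowRuleR)
    (hG : CtxWf S G)
    (ha : Typed S G a cTy)
    (ha' : Typed S (tTerm a :: G) (a.shift 1 0) cTy)
    (hx : Typed S G x (tTerm a))
    (hy : Typed S G y (tTerm a)) :
    Typed S G (tEq a x y) (tTerm dBool) := by
  have hGa : CtxWf S (tTerm a :: G) := .cons hG (ty_tTerm h4 hG ha)
  have he : Typed S G (.app (.const 5) a) (tTerm (tArr a (tArr a dBool))) :=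
    Typed.app (B := tTerm (tArr (.var 0) (tArr (.var 0) dBool))) (Typed.const hG h5) ha
  have hb1 : Typed S (tTerm a :: G) ((tArr a dBool).shift 1 0) cTy :=
    ty_tArr h3 hGa ha' (Typed.const hGa h1)
  have h2' : Typed S G (.app (.app (.const 5) a) x) (tTerm (tArr a dBool)) :=
    ty_appArrow h4 hrule hG ha hb1 he hx
  have hb2 : Typed S (tTerm a :: G) (dBool.shift 1 0) cTy := Typed.const hGa h1
  exact ty_appArrow h4 hrule hG ha hb2 h2' hy

theorem transTy_typed {S : Sig} {G : List DTm} {n : ℕ} {ρ : ℕ → ℕ}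
    (h1 : S.constType 1 = some cTy) (h2 : S.constType 2 = some cTy)
    (h3 : S.constType 3 = some tyArrow) (hG : CtxWf S G)
    (hT : ∀ j < n, G[ρ j]? = some cTy) :
    ∀ {A : HTy}, A.tvLt n → Typed S G (transTy ρ A) cTy := by
  intro A
  induction A with
  | tvar j => intro hA; exact Typed.var hG (hT j hA)
  | bool => intro _; exact Typed.const hG h1
  | ind => intro _; exact Typed.const hG h2
  | arr A B ihA ihB => intro hA; exact ty_tArr h3 hG (ihA hA.1) (ihB hA.2)

/-! ### Soundness of the term translation -/

theorem transTm_typed {S : Sig} {n : ℕ}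
    (h1 : S.constType 1 = some cTy) (h2 : S.constType 2 = some cTy)
    (h3 : S.constType 3 = some tyArrow) (h4 : S.constType 4 = some tyTerm)
    (h5 : S.constType 5 = some tyEq) (h6 : S.constType 6 = some tySelect)
    (hrule : S.hasRule arrowRuleCtx arrowRuleL arrowRuleR)
    {D : List HTy} {M : HTm} {B : HTy} (hM : HTyped D M B) :
    ∀ {G : List DTm} {ρT ρt : ℕ → ℕ}, CtxWf S G →
    (∀ j < n, G[ρT j]? = some cTy) →
    (∀ (i : ℕ) (A : HTy), D[i]? = some A →
      ∃ C, G[ρt i]? = some C ∧ C.shift (ρt i + 1) 0 = tTerm (transTy ρT A)) →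
    M.tvLt n → (∀ (i : ℕ) (A : HTy), D[i]? = some A → A.tvLt n) →
    Typed S G (transTm ρT ρt M) (tTerm (transTy ρT B)) := by
  induction hM with
  | @var D i A hlook =>
    intro G ρT ρt hG hT hv _ _
    obtain ⟨C, hC, hCs⟩ := hv i A hlook
    have := Typed.var hG hC
    rwa [hCs] at this
  | @lam D A B M hM' ih =>
    intro G ρT ρt hG hT hv htv hD
    have hAtv : A.tvLt n := htv.1
    have hMtv : M.tvLt n := htv.2
    have hD' : ∀ (i : ℕ) (A' : HTy), (A :: D)[i]? = some A' → A'.tvLt n := by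
      intro i A' hi
      cases i with
      | zero => simp at hi; subst hi; exact hAtv
      | succ m => exact hD m A' (by simpa using hi)
    have ha : Typed S G (transTy ρT A) cTy := transTy_typed h1 h2 h3 hG hT hAtv
    have hTa : Typed S G (tTerm (transTy ρT A)) DTm.type := ty_tTerm h4 hG ha
    have hG' : CtxWf S (tTerm (transTy ρT A) :: G) := .cons hG hTa
    have hT' : ∀ j < n, (tTerm (transTy ρT A) :: G)[ρT j + 1]? = some cTy := by
      intro j hj; simpa using hT j hj
    have hv' : ∀ (i : ℕ) (A' : HTy), (A :: D)[i]? = some A' →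
        ∃ C, (tTerm (transTy ρT A) :: G)[liftVar ρt i]? = some C ∧
          C.shift (liftVar ρt i + 1) 0 = tTerm (transTy (fun j => ρT j + 1) A') := by
      intro i A' hi
      cases i with
      | zero =>
        simp at hi; subst hi
        refine ⟨tTerm (transTy ρT A), by simp [liftVar], ?_⟩
        show tTerm (DTm.shift 1 0 (transTy ρT A)) = _
        rw [transTy_shift]
      | succ m =>
        obtain ⟨C, hC, hCs⟩ := hv m A' (by simpa using hi)
        refine ⟨C, by simpa [liftVar] using hC, ?_⟩
        show C.shift (ρt m + 1 + 1) 0 = _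
        rw [← DTm.shift_shift (ρt m + 1) 1 C 0, hCs]
        show tTerm (DTm.shift 1 0 (transTy ρT A')) = _
        rw [transTy_shift]
    have hbody := ih hG' hT' hv' hMtv hD'
    have habs := Typed.abs hTa hbody
    have hBtv : B.tvLt n := htyped_tvLt hM' hMtv hD'
    have hb : Typed S G (transTy ρT B) cTy := transTy_typed h1 h2 h3 hG hT hBtv
    have htarget : Typed S G (tTerm (tArr (transTy ρT A) (transTy ρT B))) DTm.type :=
      ty_tTerm h4 hG (ty_tArr h3 hG ha hb)
    have harr : DTm.arr (tTerm (transTy ρT A)) (tTerm (transTy ρT B))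
        = .pi (tTerm (transTy ρT A)) (tTerm (transTy (fun j => ρT j + 1) B)) := by
      show DTm.pi _ (tTerm (DTm.shift 1 0 (transTy ρT B))) = _
      rw [transTy_shift]
    have hconv : Conv S (.pi (tTerm (transTy ρT A)) (tTerm (transTy (fun j => ρT j + 1) B)))
        (tTerm (tArr (transTy ρT A) (transTy ρT B))) := by
      apply Relation.EqvGen.symm
      apply Relation.EqvGen.rel
      rw [← harr]
      exact red_arrow hrule
    exact Typed.conv habs htarget hconv
  | @app D A B M N hM' hN' ihM ihN =>
    intro G ρT ρt hG hT hv htv hD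
    have hf := ihM hG hT hv htv.1 hD
    have hx := ihN hG hT hv htv.2 hD
    have hABtv : (A.arr B).tvLt n := htyped_tvLt hM' htv.1 hD
    have ha : Typed S G (transTy ρT A) cTy := transTy_typed h1 h2 h3 hG hT hABtv.1
    have hG' : CtxWf S (tTerm (transTy ρT A) :: G) := .cons hG (ty_tTerm h4 hG ha)
    have hT' : ∀ j < n, (tTerm (transTy ρT A) :: G)[ρT j + 1]? = some cTy := by
      intro j hj; simpa using hT j hj
    have hb' : Typed S (tTerm (transTy ρT A) :: G) ((transTy ρT B).shift 1 0) cTy := by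
      rw [transTy_shift]
      exact transTy_typed h1 h2 h3 hG' hT' hABtv.2
    exact ty_appArrow h4 hrule hG ha hb' hf hx
  | @eq D A =>
    intro G ρT ρt hG hT hv htv hD
    have ha : Typed S G (transTy ρT A) cTy := transTy_typed h1 h2 h3 hG hT htv
    exact Typed.app (B := tTerm (tArr (.var 0) (tArr (.var 0) dBool)))
      (Typed.const hG h5) ha
  | @select D A =>
    intro G ρT ρt hG hT hv htv hD
    have ha : Typed S G (transTy ρT A) cTy := transTy_typed h1 h2 h3 hG hT htv
    exact Typed.app (B := tTerm (tArr (tArr (.var 0) dBool) (.var 0)))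
      (Typed.const hG h6) ha

/-! ### Well-formedness of the HOL signature -/

private theorem tvarc {S : Sig} {G : List DTm} {k : ℕ} (hG : CtxWf S G)
    (h : G[k]? = some cTy) : Typed S G (.var k) cTy := Typed.var hG h

set_option linter.unusedSectionVars false

section SigTyping

variable {S : Sig} (hS : SigWf S)
  (h0 : S.constType 0 = some .type)
  (h1 : S.constType 1 = some cTy)
  (h3 : S.constType 3 = some tyArrow)
  (h4 : S.constType 4 = some tyTerm)
  (h5 : S.constType 5 = some tyEq)
  (h7 : S.constType 7 = some tyProof)
  (hrule : S.hasRule arrowRuleCtx arrowRuleL arrowRuleR)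

include hS h0 h1 h3 h4 in
private theorem ty_tyEq' : Typed S [] tyEq DTm.type := by
  have c0 : CtxWf S [] := .nil hS
  have t0 : Typed S [] cTy DTm.type := Typed.const c0 h0
  have c1 : CtxWf S [cTy] := .cons c0 t0
  exact Typed.prod t0
    (ty_tTerm h4 c1 (ty_tArr h3 c1 (tvarc c1 rfl)
      (ty_tArr h3 c1 (tvarc c1 rfl) (Typed.const c1 h1)))) (Or.inl rfl)

include hS h0 h1 h3 h4 in
private theorem ty_tySelect' : Typed S [] tySelect DTm.type := by
  have c0 : CtxWf S [] := .nil hS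
  have t0 : Typed S [] cTy DTm.type := Typed.const c0 h0
  have c1 : CtxWf S [cTy] := .cons c0 t0
  exact Typed.prod t0
    (ty_tTerm h4 c1 (ty_tArr h3 c1
      (ty_tArr h3 c1 (tvarc c1 rfl) (Typed.const c1 h1)) (tvarc c1 rfl))) (Or.inl rfl)

include hS h0 h3 h4 in
private theorem ty_ruleL' : Typed S arrowRuleCtx arrowRuleL DTm.type := by
  have c0 : CtxWf S [] := .nil hS
  have t0 : Typed S [] cTy DTm.type := Typed.const c0 h0
  have c1 : CtxWf S [cTy] := .cons c0 t0
  have c2 : CtxWf S [cTy, cTy] := .cons c1 (Typed.const c1 h0)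
  exact ty_tTerm h4 c2 (ty_tArr h3 c2 (tvarc c2 rfl) (tvarc c2 rfl))

include hS h0 h3 h4 in
private theorem ty_ruleR' : Typed S arrowRuleCtx arrowRuleR DTm.type := by
  have c0 : CtxWf S [] := .nil hS
  have t0 : Typed S [] cTy DTm.type := Typed.const c0 h0
  have c1 : CtxWf S [cTy] := .cons c0 t0
  have c2 : CtxWf S [cTy, cTy] := .cons c1 (Typed.const c1 h0)
  have tA : Typed S [cTy, cTy] (tTerm (.var 1)) DTm.type := ty_tTerm h4 c2 (tvarc c2 rfl)
  have c3 : CtxWf S [tTerm (.var 1), cTy, cTy] := .cons c2 tA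
  exact Typed.prod tA (ty_tTerm h4 c3 (tvarc c3 rfl)) (Or.inl rfl)

include hS h1 h4 in
private theorem ty_tyProof' : Typed S [] tyProof DTm.kind := by
  have c0 : CtxWf S [] := .nil hS
  have tB : Typed S [] (tTerm dBool) DTm.type := ty_tTerm h4 c0 (Typed.const c0 h1)
  exact Typed.prod tB (Typed.type (.cons c0 tB)) (Or.inr rfl)

include hS h0 h1 h3 h4 h5 h7 hrule in
private theorem ty_tyRefl' : Typed S [] tyRefl DTm.type := by
  have c0 : CtxWf S [] := .nil hS
  have t0 : Typed S [] cTy DTm.type := Typed.const c0 h0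
  have c1 : CtxWf S [cTy] := .cons c0 t0
  have tx : Typed S [cTy] (tTerm (.var 0)) DTm.type := ty_tTerm h4 c1 (tvarc c1 rfl)
  have c2 : CtxWf S [tTerm (.var 0), cTy] := .cons c1 tx
  have hx : Typed S [tTerm (.var 0), cTy] (.var 0) (tTerm (.var 1)) :=
    Typed.var (A := tTerm (.var 0)) c2 rfl
  have ha : Typed S [tTerm (.var 0), cTy] (.var 1) cTy := tvarc c2 rfl
  have c3 : CtxWf S (tTerm (.var 1) :: [tTerm (.var 0), cTy]) :=
    .cons c2 (ty_tTerm h4 c2 ha)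
  have ha' : Typed S (tTerm (.var 1) :: [tTerm (.var 0), cTy]) ((DTm.var 1).shift 1 0) cTy :=
    tvarc c3 rfl
  exact Typed.prod t0
    (Typed.prod tx
      (ty_tProof h7 c2 (ty_tEq h1 h3 h4 h5 hrule c2 ha ha' hx hx)) (Or.inl rfl))
    (Or.inl rfl)

include hS h0 h1 h3 h4 h5 h7 hrule in
private theorem ty_tyFunExt' : Typed S [] tyFunExt DTm.type := by
  have c0 : CtxWf S [] := .nil hS
  have t0 : Typed S [] cTy DTm.type := Typed.const c0 h0
  have c1 : CtxWf S [cTy] := .cons c0 t0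
  have t1 : Typed S [cTy] cTy DTm.type := Typed.const c1 h0
  have c2 : CtxWf S [cTy, cTy] := .cons c1 t1
  have tF : Typed S [cTy, cTy] (tTerm (tArr (.var 1) (.var 0))) DTm.type :=
    ty_tTerm h4 c2 (ty_tArr h3 c2 (tvarc c2 rfl) (tvarc c2 rfl))
  have c3 : CtxWf S [tTerm (tArr (.var 1) (.var 0)), cTy, cTy] := .cons c2 tF
  have tG : Typed S [tTerm (tArr (.var 1) (.var 0)), cTy, cTy]
      (tTerm (tArr (.var 2) (.var 1))) DTm.type :=
    ty_tTerm h4 c3 (ty_tArr h3 c3 (tvarc c3 rfl) (tvarc c3 rfl))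
  set G4 : List DTm := [tTerm (tArr (.var 2) (.var 1)), tTerm (tArr (.var 1) (.var 0)), cTy, cTy] with hG4
  have c4 : CtxWf S G4 := .cons c3 tG
  have tx : Typed S G4 (tTerm (.var 3)) DTm.type := ty_tTerm h4 c4 (tvarc c4 rfl)
  set G5 : List DTm := tTerm (.var 3) :: G4 with hG5
  have c5 : CtxWf S G5 := .cons c4 tx
  have hfv : Typed S G5 (.var 2) (tTerm (tArr (.var 4) (.var 3))) :=
    Typed.var (A := tTerm (tArr (.var 1) (.var 0))) c5 rfl
  have hgv : Typed S G5 (.var 1) (tTerm (tArr (.var 4) (.var 3))) :=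
    Typed.var (A := tTerm (tArr (.var 2) (.var 1))) c5 rfl
  have hxv : Typed S G5 (.var 0) (tTerm (.var 4)) :=
    Typed.var (A := tTerm (.var 3)) c5 rfl
  have ha5 : Typed S G5 (.var 4) cTy := tvarc c5 rfl
  have c6 : CtxWf S (tTerm (.var 4) :: G5) := .cons c5 (ty_tTerm h4 c5 ha5)
  have hb5 : Typed S (tTerm (.var 4) :: G5) ((DTm.var 3).shift 1 0) cTy := tvarc c6 rfl
  have t1' : Typed S G5 (.app (.var 2) (.var 0)) (tTerm (.var 3)) :=
    ty_appArrow h4 hrule c5 ha5 hb5 hfv hxv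
  have t2' : Typed S G5 (.app (.var 1) (.var 0)) (tTerm (.var 3)) :=
    ty_appArrow h4 hrule c5 ha5 hb5 hgv hxv
  have ha3 : Typed S G5 (.var 3) cTy := tvarc c5 rfl
  have c6' : CtxWf S (tTerm (.var 3) :: G5) := .cons c5 (ty_tTerm h4 c5 ha3)
  have ha3' : Typed S (tTerm (.var 3) :: G5) ((DTm.var 3).shift 1 0) cTy := tvarc c6' rfl
  have tQ : Typed S G4
      (.pi (tTerm (.var 3))
        (tProof (tEq (.var 3) (.app (.var 2) (.var 0)) (.app (.var 1) (.var 0))))) DTm.type :=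
    Typed.prod tx
      (ty_tProof h7 c5 (ty_tEq h1 h3 h4 h5 hrule c5 ha3 ha3' t1' t2')) (Or.inl rfl)
  set Q : DTm := .pi (tTerm (.var 3))
    (tProof (tEq (.var 3) (.app (.var 2) (.var 0)) (.app (.var 1) (.var 0)))) with hQ
  set G5R : List DTm := Q :: G4 with hG5R
  have c5R : CtxWf S G5R := .cons c4 tQ
  have tfR : Typed S G5R (.var 2) (tTerm (tArr (.var 4) (.var 3))) :=
    Typed.var (A := tTerm (tArr (.var 1) (.var 0))) c5R rfl
  have tgR : Typed S G5R (.var 1) (tTerm (tArr (.var 4) (.var 3))) :=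
    Typed.var (A := tTerm (tArr (.var 2) (.var 1))) c5R rfl
  have haR : Typed S G5R (tArr (.var 4) (.var 3)) cTy :=
    ty_tArr h3 c5R (tvarc c5R rfl) (tvarc c5R rfl)
  have c6R : CtxWf S (tTerm (tArr (.var 4) (.var 3)) :: G5R) :=
    .cons c5R (ty_tTerm h4 c5R haR)
  have haR' : Typed S (tTerm (tArr (.var 4) (.var 3)) :: G5R)
      ((tArr (.var 4) (.var 3)).shift 1 0) cTy :=
    ty_tArr h3 c6R (tvarc c6R rfl) (tvarc c6R rfl)
  have hR : Typed S G5R (tProof (tEq (tArr (.var 4) (.var 3)) (.var 2) (.var 1))) DTm.type :=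
    ty_tProof h7 c5R (ty_tEq h1 h3 h4 h5 hrule c5R haR haR' tfR tgR)
  exact Typed.prod t0 (Typed.prod t1 (Typed.prod tF (Typed.prod tG
    (Typed.prod tQ hR (Or.inl rfl)) (Or.inl rfl)) (Or.inl rfl)) (Or.inl rfl)) (Or.inl rfl)

include hS h0 h1 h3 h4 h5 h7 hrule in
private theorem ty_tyAppThm' : Typed S [] tyAppThm DTm.type := by
  have c0 : CtxWf S [] := .nil hS
  have t0 : Typed S [] cTy DTm.type := Typed.const c0 h0
  have c1 : CtxWf S [cTy] := .cons c0 t0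
  have t1 : Typed S [cTy] cTy DTm.type := Typed.const c1 h0
  have c2 : CtxWf S [cTy, cTy] := .cons c1 t1
  have tF : Typed S [cTy, cTy] (tTerm (tArr (.var 1) (.var 0))) DTm.type :=
    ty_tTerm h4 c2 (ty_tArr h3 c2 (tvarc c2 rfl) (tvarc c2 rfl))
  have c3 : CtxWf S [tTerm (tArr (.var 1) (.var 0)), cTy, cTy] := .cons c2 tF
  have tG : Typed S [tTerm (tArr (.var 1) (.var 0)), cTy, cTy]
      (tTerm (tArr (.var 2) (.var 1))) DTm.type :=
    ty_tTerm h4 c3 (ty_tArr h3 c3 (tvarc c3 rfl) (tvarc c3 rfl))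
  set G4 : List DTm := [tTerm (tArr (.var 2) (.var 1)), tTerm (tArr (.var 1) (.var 0)), cTy, cTy] with hG4
  have c4 : CtxWf S G4 := .cons c3 tG
  have tx : Typed S G4 (tTerm (.var 3)) DTm.type := ty_tTerm h4 c4 (tvarc c4 rfl)
  set G5 : List DTm := tTerm (.var 3) :: G4 with hG5
  have c5 : CtxWf S G5 := .cons c4 tx
  have ty' : Typed S G5 (tTerm (.var 4)) DTm.type := ty_tTerm h4 c5 (tvarc c5 rfl)
  set G6 : List DTm := tTerm (.var 4) :: G5 with hG6
  have c6 : CtxWf S G6 := .cons c5 ty'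
  -- H1 = tProof (tEq (tArr (var 5)(var 4)) (var 3) (var 2)) in G6
  have haH1 : Typed S G6 (tArr (.var 5) (.var 4)) cTy :=
    ty_tArr h3 c6 (tvarc c6 rfl) (tvarc c6 rfl)
  have c7' : CtxWf S (tTerm (tArr (.var 5) (.var 4)) :: G6) :=
    .cons c6 (ty_tTerm h4 c6 haH1)
  have haH1' : Typed S (tTerm (tArr (.var 5) (.var 4)) :: G6)
      ((tArr (.var 5) (.var 4)).shift 1 0) cTy :=
    ty_tArr h3 c7' (tvarc c7' rfl) (tvarc c7' rfl)
  have hf6 : Typed S G6 (.var 3) (tTerm (tArr (.var 5) (.var 4))) :=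
    Typed.var (A := tTerm (tArr (.var 1) (.var 0))) c6 rfl
  have hg6 : Typed S G6 (.var 2) (tTerm (tArr (.var 5) (.var 4))) :=
    Typed.var (A := tTerm (tArr (.var 2) (.var 1))) c6 rfl
  have tH1 : Typed S G6 (tProof (tEq (tArr (.var 5) (.var 4)) (.var 3) (.var 2))) DTm.type :=
    ty_tProof h7 c6 (ty_tEq h1 h3 h4 h5 hrule c6 haH1 haH1' hf6 hg6)
  set G7 : List DTm := tProof (tEq (tArr (.var 5) (.var 4)) (.var 3) (.var 2)) :: G6 with hG7
  have c7 : CtxWf S G7 := .cons c6 tH1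
  -- H2' = tProof (tEq (var 6) (var 2) (var 1)) in G7
  have ha7 : Typed S G7 (.var 6) cTy := tvarc c7 rfl
  have c8' : CtxWf S (tTerm (.var 6) :: G7) := .cons c7 (ty_tTerm h4 c7 ha7)
  have ha7' : Typed S (tTerm (.var 6) :: G7) ((DTm.var 6).shift 1 0) cTy := tvarc c8' rfl
  have hx7 : Typed S G7 (.var 2) (tTerm (.var 6)) :=
    Typed.var (A := tTerm (.var 3)) c7 rfl
  have hy7 : Typed S G7 (.var 1) (tTerm (.var 6)) :=
    Typed.var (A := tTerm (.var 4)) c7 rfl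
  have tH2 : Typed S G7 (tProof (tEq (.var 6) (.var 2) (.var 1))) DTm.type :=
    ty_tProof h7 c7 (ty_tEq h1 h3 h4 h5 hrule c7 ha7 ha7' hx7 hy7)
  set G8 : List DTm := tProof (tEq (.var 6) (.var 2) (.var 1)) :: G7 with hG8
  have c8 : CtxWf S G8 := .cons c7 tH2
  -- C'' = tProof (tEq (var 6) (app (var 5) (var 3)) (app (var 4) (var 2))) in G8
  have ha8 : Typed S G8 (.var 6) cTy := tvarc c8 rfl
  have c9' : CtxWf S (tTerm (.var 6) :: G8) := .cons c8 (ty_tTerm h4 c8 ha8)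
  have ha8' : Typed S (tTerm (.var 6) :: G8) ((DTm.var 6).shift 1 0) cTy := tvarc c9' rfl
  have hf8 : Typed S G8 (.var 5) (tTerm (tArr (.var 7) (.var 6))) :=
    Typed.var (A := tTerm (tArr (.var 1) (.var 0))) c8 rfl
  have hg8 : Typed S G8 (.var 4) (tTerm (tArr (.var 7) (.var 6))) :=
    Typed.var (A := tTerm (tArr (.var 2) (.var 1))) c8 rfl
  have hx8 : Typed S G8 (.var 3) (tTerm (.var 7)) :=
    Typed.var (A := tTerm (.var 3)) c8 rfl
  have hy8 : Typed S G8 (.var 2) (tTerm (.var 7)) :=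
    Typed.var (A := tTerm (.var 4)) c8 rfl
  have haA : Typed S G8 (.var 7) cTy := tvarc c8 rfl
  have cA' : CtxWf S (tTerm (.var 7) :: G8) := .cons c8 (ty_tTerm h4 c8 haA)
  have haA' : Typed S (tTerm (.var 7) :: G8) ((DTm.var 6).shift 1 0) cTy := tvarc cA' rfl
  have tfx : Typed S G8 (.app (.var 5) (.var 3)) (tTerm (.var 6)) :=
    ty_appArrow h4 hrule c8 haA haA' hf8 hx8
  have tgy : Typed S G8 (.app (.var 4) (.var 2)) (tTerm (.var 6)) :=
    ty_appArrow h4 hrule c8 haA haA' hg8 hy8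
  have tC : Typed S G8
      (tProof (tEq (.var 6) (.app (.var 5) (.var 3)) (.app (.var 4) (.var 2)))) DTm.type :=
    ty_tProof h7 c8 (ty_tEq h1 h3 h4 h5 hrule c8 ha8 ha8' tfx tgy)
  exact Typed.prod t0 (Typed.prod t1 (Typed.prod tF (Typed.prod tG (Typed.prod tx
    (Typed.prod ty' (Typed.prod tH1 (Typed.prod tH2 tC (Or.inl rfl)) (Or.inl rfl))
      (Or.inl rfl)) (Or.inl rfl)) (Or.inl rfl)) (Or.inl rfl)) (Or.inl rfl)) (Or.inl rfl)

include hS h0 h1 h3 h4 h5 h7 hrule in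
private theorem ty_tyPropExt' : Typed S [] tyPropExt DTm.type := by
  have c0 : CtxWf S [] := .nil hS
  have tB0 : Typed S [] (tTerm dBool) DTm.type := ty_tTerm h4 c0 (Typed.const c0 h1)
  have c1 : CtxWf S [tTerm dBool] := .cons c0 tB0
  have tB1 : Typed S [tTerm dBool] (tTerm dBool) DTm.type := ty_tTerm h4 c1 (Typed.const c1 h1)
  set G2 : List DTm := [tTerm dBool, tTerm dBool] with hG2
  have c2 : CtxWf S G2 := .cons c1 tB1
  have hp2 : Typed S G2 (.var 0) (tTerm dBool) := Typed.var (A := tTerm dBool) c2 rfl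
  have tP0 : Typed S G2 (tProof (.var 0)) DTm.type := ty_tProof h7 c2 hp2
  have c3x : CtxWf S (tProof (.var 0) :: G2) := .cons c2 tP0
  have hq3 : Typed S (tProof (.var 0) :: G2) (.var 2) (tTerm dBool) :=
    Typed.var (A := tTerm dBool) c3x rfl
  have tH1 : Typed S G2 (.pi (tProof (.var 0)) (tProof (.var 2))) DTm.type :=
    Typed.prod tP0 (ty_tProof h7 c3x hq3) (Or.inl rfl)
  set G3 : List DTm := .pi (tProof (.var 0)) (tProof (.var 2)) :: G2 with hG3
  have c3 : CtxWf S G3 := .cons c2 tH1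
  -- H2' = pi (tProof (var 1)) (tProof (var 3)) in G3
  have hp3 : Typed S G3 (.var 1) (tTerm dBool) := Typed.var (A := tTerm dBool) c3 rfl
  have tP1 : Typed S G3 (tProof (.var 1)) DTm.type := ty_tProof h7 c3 hp3
  have c4x : CtxWf S (tProof (.var 1) :: G3) := .cons c3 tP1
  have hq4 : Typed S (tProof (.var 1) :: G3) (.var 3) (tTerm dBool) :=
    Typed.var (A := tTerm dBool) c4x rfl
  have tH2 : Typed S G3 (.pi (tProof (.var 1)) (tProof (.var 3))) DTm.type :=
    Typed.prod tP1 (ty_tProof h7 c4x hq4) (Or.inl rfl)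
  set G4 : List DTm := .pi (tProof (.var 1)) (tProof (.var 3)) :: G3 with hG4
  have c4 : CtxWf S G4 := .cons c3 tH2
  -- C'' = tProof (tEq dBool (var 3) (var 2)) in G4
  have haB : Typed S G4 dBool cTy := Typed.const c4 h1
  have cB' : CtxWf S (tTerm dBool :: G4) := .cons c4 (ty_tTerm h4 c4 haB)
  have haB' : Typed S (tTerm dBool :: G4) (dBool.shift 1 0) cTy := Typed.const cB' h1
  have hx4 : Typed S G4 (.var 3) (tTerm dBool) := Typed.var (A := tTerm dBool) c4 rfl
  have hy4 : Typed S G4 (.var 2) (tTerm dBool) := Typed.var (A := tTerm dBool) c4 rfl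
  have tC : Typed S G4 (tProof (tEq dBool (.var 3) (.var 2))) DTm.type :=
    ty_tProof h7 c4 (ty_tEq h1 h3 h4 h5 hrule c4 haB haB' hx4 hy4)
  exact Typed.prod tB0 (Typed.prod tB1 (Typed.prod tH1 (Typed.prod tH2 tC (Or.inl rfl))
    (Or.inl rfl)) (Or.inl rfl)) (Or.inl rfl)

include hS h0 h1 h3 h4 h5 h7 hrule in
private theorem ty_tyEqMp' : Typed S [] tyEqMp DTm.type := by
  have c0 : CtxWf S [] := .nil hS
  have tB0 : Typed S [] (tTerm dBool) DTm.type := ty_tTerm h4 c0 (Typed.const c0 h1)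
  have c1 : CtxWf S [tTerm dBool] := .cons c0 tB0
  have tB1 : Typed S [tTerm dBool] (tTerm dBool) DTm.type := ty_tTerm h4 c1 (Typed.const c1 h1)
  set G2 : List DTm := [tTerm dBool, tTerm dBool] with hG2
  have c2 : CtxWf S G2 := .cons c1 tB1
  have haB : Typed S G2 dBool cTy := Typed.const c2 h1
  have cB' : CtxWf S (tTerm dBool :: G2) := .cons c2 (ty_tTerm h4 c2 haB)
  have haB' : Typed S (tTerm dBool :: G2) (dBool.shift 1 0) cTy := Typed.const cB' h1
  have hp2 : Typed S G2 (.var 1) (tTerm dBool) := Typed.var (A := tTerm dBool) c2 rfl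
  have hq2 : Typed S G2 (.var 0) (tTerm dBool) := Typed.var (A := tTerm dBool) c2 rfl
  have tH1 : Typed S G2 (tProof (tEq dBool (.var 1) (.var 0))) DTm.type :=
    ty_tProof h7 c2 (ty_tEq h1 h3 h4 h5 hrule c2 haB haB' hp2 hq2)
  set G3 : List DTm := tProof (tEq dBool (.var 1) (.var 0)) :: G2 with hG3
  have c3 : CtxWf S G3 := .cons c2 tH1
  have hp3 : Typed S G3 (.var 2) (tTerm dBool) := Typed.var (A := tTerm dBool) c3 rfl
  have tP2 : Typed S G3 (tProof (.var 2)) DTm.type := ty_tProof h7 c3 hp3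
  have c4x : CtxWf S (tProof (.var 2) :: G3) := .cons c3 tP2
  have hq4 : Typed S (tProof (.var 2) :: G3) (.var 2) (tTerm dBool) :=
    Typed.var (A := tTerm dBool) c4x rfl
  have tH2 : Typed S G3 (.pi (tProof (.var 2)) (tProof (.var 2))) DTm.type :=
    Typed.prod tP2 (ty_tProof h7 c4x hq4) (Or.inl rfl)
  exact Typed.prod tB0 (Typed.prod tB1 (Typed.prod tH1 tH2 (Or.inl rfl))
    (Or.inl rfl)) (Or.inl rfl)

end SigTyping

theorem sigWf_holSig : SigWf holSig := by
  have w0 : SigWf Sig.empty := .empty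
  have w1 : SigWf (Sig.empty.pushConst 0 .type) :=
    .pushConst w0 (Typed.type (.nil w0)) (Or.inr rfl) rfl
  have w2 : SigWf ((Sig.empty.pushConst 0 .type).pushConst 1 cTy) :=
    .pushConst w1 (Typed.const (.nil w1) rfl) (Or.inl rfl) rfl
  have w3 : SigWf (((Sig.empty.pushConst 0 .type).pushConst 1 cTy).pushConst 2 cTy) :=
    .pushConst w2 (Typed.const (.nil w2) rfl) (Or.inl rfl) rfl
  have w4 : SigWf ((((Sig.empty.pushConst 0 .type).pushConst 1 cTy).pushConst 2 cTy).pushConst 3 tyArrow) := by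
    refine .pushConst w3 ?_ (Or.inl rfl) rfl
    have c0 : CtxWf _ [] := CtxWf.nil w3
    have t0 : Typed _ [] cTy DTm.type := Typed.const c0 rfl
    have c1 : CtxWf _ [cTy] := .cons c0 t0
    have t1 : Typed _ [cTy] cTy DTm.type := Typed.const c1 rfl
    have c2 : CtxWf _ [cTy, cTy] := .cons c1 t1
    exact Typed.prod t0 (Typed.prod t1 (Typed.const c2 rfl) (Or.inl rfl)) (Or.inl rfl)
  have w5 : SigWf baseSig := by
    refine .pushConst w4 ?_ (Or.inr rfl) rfl
    have c0 : CtxWf _ [] := CtxWf.nil w4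
    have t0 : Typed _ [] cTy DTm.type := Typed.const c0 rfl
    exact Typed.prod t0 (Typed.type (.cons c0 t0)) (Or.inr rfl)
  have w6 : SigWf (baseSig.pushConst 5 tyEq) :=
    .pushConst w5 (ty_tyEq' w5 rfl rfl rfl rfl) (Or.inl rfl) rfl
  have w7 : SigWf ((baseSig.pushConst 5 tyEq).pushConst 6 tySelect) :=
    .pushConst w6 (ty_tySelect' w6 rfl rfl rfl rfl) (Or.inl rfl) rfl
  have w8 : SigWf (((baseSig.pushConst 5 tyEq).pushConst 6 tySelect).pushRule
      arrowRuleCtx arrowRuleL arrowRuleR) :=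
    .pushRule w7 (ty_ruleL' w7 rfl rfl rfl) (ty_ruleR' w7 rfl rfl rfl)
  have w9 : SigWf ((((baseSig.pushConst 5 tyEq).pushConst 6 tySelect).pushRule
      arrowRuleCtx arrowRuleL arrowRuleR).pushConst 7 tyProof) :=
    .pushConst w8 (ty_tyProof' w8 rfl rfl) (Or.inr rfl) rfl
  have w10 : SigWf (((((baseSig.pushConst 5 tyEq).pushConst 6 tySelect).pushRule
      arrowRuleCtx arrowRuleL arrowRuleR).pushConst 7 tyProof).pushConst 8 tyRefl) :=
    .pushConst w9 (ty_tyRefl' w9 rfl rfl rfl rfl rfl rfl (Or.inl ⟨rfl, rfl, rfl⟩))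
      (Or.inl rfl) rfl
  have w11 : SigWf ((((((baseSig.pushConst 5 tyEq).pushConst 6 tySelect).pushRule
      arrowRuleCtx arrowRuleL arrowRuleR).pushConst 7 tyProof).pushConst 8 tyRefl).pushConst 9 tyFunExt) :=
    .pushConst w10 (ty_tyFunExt' w10 rfl rfl rfl rfl rfl rfl (Or.inl ⟨rfl, rfl, rfl⟩))
      (Or.inl rfl) rfl
  have w12 : SigWf (((((((baseSig.pushConst 5 tyEq).pushConst 6 tySelect).pushRule
      arrowRuleCtx arrowRuleL arrowRuleR).pushConst 7 tyProof).pushConst 8 tyRefl).pushConst 9 tyFunExt).pushConst 10 tyAppThm) :=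
    .pushConst w11 (ty_tyAppThm' w11 rfl rfl rfl rfl rfl rfl (Or.inl ⟨rfl, rfl, rfl⟩))
      (Or.inl rfl) rfl
  have w13 : SigWf ((((((((baseSig.pushConst 5 tyEq).pushConst 6 tySelect).pushRule
      arrowRuleCtx arrowRuleL arrowRuleR).pushConst 7 tyProof).pushConst 8 tyRefl).pushConst 9 tyFunExt).pushConst 10 tyAppThm).pushConst 11 tyPropExt) :=
    .pushConst w12 (ty_tyPropExt' w12 rfl rfl rfl rfl rfl rfl (Or.inl ⟨rfl, rfl, rfl⟩))
      (Or.inl rfl) rfl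
  exact .pushConst w13 (ty_tyEqMp' w13 rfl rfl rfl rfl rfl rfl (Or.inl ⟨rfl, rfl, rfl⟩))
    (Or.inl rfl) rfl

theorem holSig_hasRule : holSig.hasRule arrowRuleCtx arrowRuleL arrowRuleR :=
  Or.inl ⟨rfl, rfl, rfl⟩

/-! ### The translated context -/

theorem DTm.subst0_var0 : ∀ X : DTm, X.subst0 (.var 0) = DTm.subst (fun n => .var (n - 1)) X := by
  intro X
  unfold DTm.subst0
  congr 1
  funext k
  cases k <;> rfl

theorem dTermCtx_length : ∀ D : List HTy, (dTermCtx D).length = D.length := by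
  intro D
  induction D with
  | nil => rfl
  | cons T D ih => simp [dTermCtx, ih]

theorem main_ctx_cTy_lookup (D : List HTy) (n j : ℕ) (hj : j < n) :
    (dTermCtx D ++ List.replicate n cTy)[D.length + j]? = some cTy := by
  rw [List.getElem?_append_right (by rw [dTermCtx_length]; omega)]
  rw [dTermCtx_length]
  simp [List.getElem?_replicate]
  omega

theorem dTermCtx_lookup : ∀ (D : List HTy) (i : ℕ) (A : HTy), D[i]? = some A →
    (dTermCtx D)[i]? = some (tTerm (transTy (fun j => (D.length - (i+1)) + j) A)) := by
  intro D
  induction D with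
  | nil => intro i A h; simp at h
  | cons T D ih =>
    intro i A h
    cases i with
    | zero =>
      have hTA : T = A := by simpa using h
      subst hTA
      have e : (fun j => (T :: D).length - (0+1) + j) = fun j => D.length + j := by
        funext j; simp
      rw [e]
      show ((tTerm (transTy (fun j => D.length + j) T)) :: dTermCtx D)[0]? = _
      simp
    | succ m =>
      have e : (fun j => (T :: D).length - (m+1+1) + j) = fun j => D.length - (m+1) + j := by
        funext j
        congr 1
        simp
      rw [e,
        show dTermCtx (T :: D) = tTerm (transTy (fun j => D.length + j) T) :: dTermCtx D from rfl,
        List.getElem?_cons_succ]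
      exact ih m A (by simpa using h)

theorem ctxWf_replicate (m : ℕ) : CtxWf holSig (List.replicate m cTy) := by
  induction m with
  | zero => exact .nil sigWf_holSig
  | succ k ih =>
    rw [List.replicate_succ]
    exact .cons ih (Typed.const ih rfl)

theorem ctxWf_main {n : ℕ} : ∀ D : List HTy, (∀ T ∈ D, T.tvLt n) →
    CtxWf holSig (dTermCtx D ++ List.replicate n cTy) := by
  intro D
  induction D with
  | nil => intro _; exact ctxWf_replicate n
  | cons T D ih =>
    intro hD
    have hG : CtxWf holSig (dTermCtx D ++ List.replicate n cTy) :=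
      ih (fun T' hT' => hD T' (List.mem_cons_of_mem _ hT'))
    have hT : ∀ j < n, (dTermCtx D ++ List.replicate n cTy)[D.length + j]? = some cTy :=
      fun j hj => main_ctx_cTy_lookup D n j hj
    exact .cons hG (ty_tTerm (S := holSig) rfl hG
      (transTy_typed (S := holSig) rfl rfl rfl hG hT (hD T List.mem_cons_self)))
/-- The `Beta` rule of HOL is validated by reflexivity in the translation: for
a HOL term `M` of type `B` whose term variable `x = var 0` has type `A`, the
Dedukti term `Refl |B| |M|` is well-typed in Σ, in the context declaring the
translated free type and term variables of `(λx:A. M) x`, with the type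
`‖(λx:A. M) x = M‖ = proof (eq |B| |(λx:A. M) x| |M|)`. -/
theorem beta_rule_by_refl (n : ℕ) (Δ : List HTy) (A B : HTy) (M : HTm)
    (hM : HTyped (A :: Δ) M B) (hA : A.tvLt n) (hB : B.tvLt n) (hMtv : M.tvLt n)
    (hΔ : ∀ T ∈ Δ, T.tvLt n) :
    Typed holSig (dTermCtx (A :: Δ) ++ List.replicate n cTy)
      (.app (.app dRefl (transTy (fun j => Δ.length + 1 + j) B))
        (transTm (fun j => Δ.length + 1 + j) (fun i => i) M))
      (tProof (tEq (transTy (fun j => Δ.length + 1 + j) B)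
        (transTm (fun j => Δ.length + 1 + j) (fun i => i)
          (.app (.lam A (M.shift 1 1)) (.var 0)))
        (transTm (fun j => Δ.length + 1 + j) (fun i => i) M))) := by
  have hsig : SigWf holSig := sigWf_holSig
  have hrule : holSig.hasRule arrowRuleCtx arrowRuleL arrowRuleR := holSig_hasRule
  have hDtv : ∀ (i : ℕ) (T : HTy), (A :: Δ)[i]? = some T → T.tvLt n := by
    intro i T h
    cases i with
    | zero => simp at h; subst h; exact hA
    | succ m =>
      have h' : Δ[m]? = some T := by simpa using h
      obtain ⟨hl, rfl⟩ := List.getElem?_eq_some_iff.mp h'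
      exact hΔ _ (List.getElem_mem hl)
  have hΓ : CtxWf holSig (dTermCtx (A :: Δ) ++ List.replicate n cTy) := by
    apply ctxWf_main
    intro T hT
    rcases List.mem_cons.mp hT with h | h
    · subst h; exact hA
    · exact hΔ T h
  have hT : ∀ j < n, (dTermCtx (A :: Δ) ++ List.replicate n cTy)[Δ.length + 1 + j]? = some cTy := by
    intro j hj
    have := main_ctx_cTy_lookup (A :: Δ) n j hj
    simpa [Nat.add_right_comm] using this
  have hv : ∀ (i : ℕ) (T : HTy), (A :: Δ)[i]? = some T →
      ∃ C, (dTermCtx (A :: Δ) ++ List.replicate n cTy)[i]? = some C ∧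
        C.shift (i + 1) 0 = tTerm (transTy (fun j => Δ.length + 1 + j) T) := by
    intro i T hiT
    have hlen : i < (A :: Δ).length := (List.getElem?_eq_some_iff.mp hiT).1
    have hd := dTermCtx_lookup (A :: Δ) i T hiT
    refine ⟨tTerm (transTy (fun j => ((A :: Δ).length - (i+1)) + j) T), ?_, ?_⟩
    · rw [List.getElem?_append, if_pos (by rw [dTermCtx_length]; exact hlen)]
      exact hd
    · show tTerm (DTm.shift (i+1) 0 (transTy (fun j => ((A :: Δ).length - (i+1)) + j) T)) = _
      rw [transTy_shift]
      have : (fun j => ((A :: Δ).length - (i+1)) + j + (i+1)) = fun j => Δ.length + 1 + j := by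
        funext j
        simp at hlen ⊢
        omega
      rw [this]
  have haB : Typed holSig (dTermCtx (A :: Δ) ++ List.replicate n cTy)
      (transTy (fun j => Δ.length + 1 + j) B) cTy :=
    transTy_typed (S := holSig) rfl rfl rfl hΓ hT hB
  have hMty : Typed holSig (dTermCtx (A :: Δ) ++ List.replicate n cTy)
      (transTm (fun j => Δ.length + 1 + j) (fun i => i) M)
      (tTerm (transTy (fun j => Δ.length + 1 + j) B)) :=
    transTm_typed (S := holSig) rfl rfl rfl rfl rfl rfl hrule hM hΓ hT hv hMtv hDtv
  have h1 : Typed holSig (dTermCtx (A :: Δ) ++ List.replicate n cTy)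
      (.app dRefl (transTy (fun j => Δ.length + 1 + j) B))
      (.pi (tTerm (transTy (fun j => Δ.length + 1 + j) B))
        (tProof (tEq (DTm.shift 1 0 (transTy (fun j => Δ.length + 1 + j) B))
          (.var 0) (.var 0)))) :=
    Typed.app (B := .pi (tTerm (.var 0)) (tProof (tEq (.var 1) (.var 0) (.var 0))))
      (Typed.const hΓ (show holSig.constType 8 = some tyRefl from rfl)) haB
  have h2 := Typed.app h1 hMty
  have e2 : (tProof (tEq (DTm.shift 1 0 (transTy (fun j => Δ.length + 1 + j) B))
        (.var 0) (.var 0))).subst0 (transTm (fun j => Δ.length + 1 + j) (fun i => i) M)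
      = tProof (tEq (transTy (fun j => Δ.length + 1 + j) B)
          (transTm (fun j => Δ.length + 1 + j) (fun i => i) M)
          (transTm (fun j => Δ.length + 1 + j) (fun i => i) M)) := by
    show tProof (tEq ((DTm.shift 1 0 (transTy (fun j => Δ.length + 1 + j) B)).subst0
      (transTm (fun j => Δ.length + 1 + j) (fun i => i) M)) _ _) = _
    rw [DTm.subst0_shift_cancel]
    rfl
  rw [e2] at h2
  -- typing of the redex
  have hredexTyped : HTyped (A :: Δ) (.app (.lam A (M.shift 1 1)) (.var 0)) B :=
    HTyped.app (HTyped.lam (htyped_shift (A0 := A) hM [A] Δ rfl)) (HTyped.var (by simp))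
  have hredextv : HTm.tvLt n (.app (.lam A (M.shift 1 1)) (.var 0)) :=
    ⟨⟨hA, HTm.tvLt_shift M 1 1 hMtv⟩, trivial⟩
  have hRd : Typed holSig (dTermCtx (A :: Δ) ++ List.replicate n cTy)
      (transTm (fun j => Δ.length + 1 + j) (fun i => i) (.app (.lam A (M.shift 1 1)) (.var 0)))
      (tTerm (transTy (fun j => Δ.length + 1 + j) B)) :=
    transTm_typed (S := holSig) rfl rfl rfl rfl rfl rfl hrule hredexTyped hΓ hT hv hredextv hDtv
  -- typing of the target type
  have hGa : CtxWf holSig (tTerm (transTy (fun j => Δ.length + 1 + j) B)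
      :: (dTermCtx (A :: Δ) ++ List.replicate n cTy)) :=
    .cons hΓ (ty_tTerm (S := holSig) rfl hΓ haB)
  have hT' : ∀ j < n, (tTerm (transTy (fun j => Δ.length + 1 + j) B)
      :: (dTermCtx (A :: Δ) ++ List.replicate n cTy))[(Δ.length + 1 + j) + 1]? = some cTy := by
    intro j hj
    simpa using hT j hj
  have haB' : Typed holSig (tTerm (transTy (fun j => Δ.length + 1 + j) B)
      :: (dTermCtx (A :: Δ) ++ List.replicate n cTy))
      ((transTy (fun j => Δ.length + 1 + j) B).shift 1 0) cTy := by
    rw [transTy_shift]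
    exact transTy_typed (S := holSig) rfl rfl rfl hGa hT' hB
  have htgt : Typed holSig (dTermCtx (A :: Δ) ++ List.replicate n cTy)
      (tProof (tEq (transTy (fun j => Δ.length + 1 + j) B)
        (transTm (fun j => Δ.length + 1 + j) (fun i => i) (.app (.lam A (M.shift 1 1)) (.var 0)))
        (transTm (fun j => Δ.length + 1 + j) (fun i => i) M))) DTm.type :=
    ty_tProof (S := holSig) rfl hΓ (ty_tEq (S := holSig) rfl rfl rfl rfl hrule hΓ haB haB' hRd hMty)
  -- the conversion
  have ekey : DTm.subst0 (transTm (fun j => (Δ.length + 1 + j) + 1) (liftVar (fun i => i))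
      (M.shift 1 1)) (.var 0) = transTm (fun j => Δ.length + 1 + j) (fun i => i) M := by
    rw [transTm_hshift, DTm.subst0_var0, transTm_rename]
    have eT : (fun j => ((Δ.length + 1 + j) + 1) - 1) = fun j => Δ.length + 1 + j := by
      funext j; omega
    have et : (fun i => (if i < 1 then liftVar (fun i => i) i
        else liftVar (fun i => i) (i + 1)) - 1) = fun i : ℕ => i := by
      funext i
      cases i with
      | zero => rfl
      | succ m => simp [liftVar]
    rw [eT, et]
  have hbeta := Red.beta (S := holSig) (tTerm (transTy (fun j => Δ.length + 1 + j) A))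
    (transTm (fun j => (Δ.length + 1 + j) + 1) (liftVar (fun i => i)) (M.shift 1 1)) (.var 0)
  rw [ekey] at hbeta
  have hstep : Red holSig
      (tProof (tEq (transTy (fun j => Δ.length + 1 + j) B)
        (transTm (fun j => Δ.length + 1 + j) (fun i => i) (.app (.lam A (M.shift 1 1)) (.var 0)))
        (transTm (fun j => Δ.length + 1 + j) (fun i => i) M)))
      (tProof (tEq (transTy (fun j => Δ.length + 1 + j) B)
        (transTm (fun j => Δ.length + 1 + j) (fun i => i) M)
        (transTm (fun j => Δ.length + 1 + j) (fun i => i) M))) :=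
    Red.appR (.const 7) (Red.appL _ (Red.appR _ hbeta))
  exact Typed.conv h2 htgt
    (Relation.EqvGen.symm _ _ (Relation.EqvGen.rel _ _ hstep))


end HolDk
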